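/- Let A be a unital C*-algebra, a a nonzero positive element of A, and x, y, z ∈ A admitting a-adjoints x^{#a}, y^{#a}, z^{#a}, with all the a-seminorms appearing below finite and ‖y‖_a ≤ 1. Then v_a(x y z^{#a}) ≤ (‖y‖_a / 2)·‖x x^{#a} + z z^{#a}‖_a. -/

import Mathlib

open scoped ComplexOrder

section

variable {A : Type*} [CStarAlgebra A] [PartialOrder A] [StarOrderedRing A]

/-- A positive linear functional on `A`: `f (x* x) ≥ 0` for all `x`. -/
def IsPosLF (f : A →ₗ[ℂ] ℂ) : Prop := ∀ x : A, 0 ≤ f (star x * x)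

/-- Membership in `S_a(A)`: positive linear functionals `f` with `f a = 1`. -/
def MemSa (a : A) (f : A →ₗ[ℂ] ℂ) : Prop := IsPosLF f ∧ f a = 1

/-- The set of values whose supremum is the `a`-seminorm `‖x‖ₐ`. -/
def aNormSet (a x : A) : Set ℝ :=
  {r : ℝ | ∃ f : A →ₗ[ℂ] ℂ, MemSa a f ∧ r = Real.sqrt (f (star x * a * x)).re}

/-- The `a`-seminorm `‖x‖ₐ = sup {√(f(x* a x)) : f ∈ S_a(A)}`. -/
noncomputable def aNorm (a x : A) : ℝ := sSup (aNormSet a x)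

/-- The `a`-numerical radius `vₐ(x) = sup {|f(a x)| : f ∈ S_a(A)}`. -/
noncomputable def aNR (a x : A) : ℝ :=
  sSup {r : ℝ | ∃ f : A →ₗ[ℂ] ℂ, MemSa a f ∧ r = ‖f (a * x)‖}

lemma posLF_nonneg {f : A →ₗ[ℂ] ℂ} (hf : IsPosLF f) {b : A} (hb : 0 ≤ b) : 0 ≤ f b := by
  rw [StarOrderedRing.nonneg_iff] at hb
  induction hb using AddSubmonoid.closure_induction with
  | mem x hx => obtain ⟨s, rfl⟩ := hx; exact hf s
  | zero => simp
  | add x y _ _ hx hy => rw [map_add]; exact add_nonneg hx hy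

lemma cs_aux {a : A} (ha : 0 ≤ a) {f : A →ₗ[ℂ] ℂ} (hf : IsPosLF f) (u v : A) (c : ℂ) :
    f (star (u + c • v) * a * (u + c • v)) =
      f (star u * a * u) + (starRingEnd ℂ c) * f (star v * a * u)
        + c * f (star u * a * v) + (c * starRingEnd ℂ c) * f (star v * a * v) := by
  rw [star_add, star_smul]
  simp only [add_mul, mul_add, smul_mul_assoc, mul_smul_comm, map_add, map_smul, smul_eq_mul,
    Complex.star_def]
  ring

lemma cs_sym {a : A} (ha : 0 ≤ a) {f : A →ₗ[ℂ] ℂ} (hf : IsPosLF f) (u v : A) :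
    f (star u * a * v) = starRingEnd ℂ (f (star v * a * u)) := by
  have hBnn : ∀ w : A, 0 ≤ f (star w * a * w) := fun w => posLF_nonneg hf (star_left_conjugate_nonneg ha w)
  have h1 := (Complex.nonneg_iff.mp (hBnn (u + (1:ℂ) • v))).2
  have h2 := (Complex.nonneg_iff.mp (hBnn (u + (Complex.I) • v))).2
  rw [cs_aux ha hf] at h1 h2
  have hu := (Complex.nonneg_iff.mp (hBnn u)).2
  have hv := (Complex.nonneg_iff.mp (hBnn v)).2
  simp only [Complex.add_im, Complex.mul_im, Complex.mul_re, map_one, Complex.one_re,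
    Complex.one_im, Complex.conj_I, Complex.I_re, Complex.I_im, Complex.neg_re, Complex.neg_im,
    one_mul, mul_one] at h1 h2
  norm_num at h1 h2
  apply Complex.ext <;> simp only [Complex.conj_re, Complex.conj_im] <;> nlinarith [h1, h2]

lemma cs {a : A} (ha : 0 ≤ a) {f : A →ₗ[ℂ] ℂ} (hf : IsPosLF f) (u v : A) :
    ‖f (star v * a * u)‖ ^ 2 ≤ (f (star u * a * u)).re * (f (star v * a * v)).re := by
  have hBnn : ∀ w : A, 0 ≤ f (star w * a * w) := fun w => posLF_nonneg hf (star_left_conjugate_nonneg ha w)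
  set α := f (star v * a * u) with hα
  set P := f (star u * a * u)
  set Q := f (star v * a * v)
  have hPre : 0 ≤ P.re := (Complex.nonneg_iff.mp (hBnn u)).1
  have hQre : 0 ≤ Q.re := (Complex.nonneg_iff.mp (hBnn v)).1
  by_cases h0 : ‖α‖ = 0
  · rw [h0]; norm_num; positivity
  have habs : (0:ℝ) < ‖α‖ := lt_of_le_of_ne (norm_nonneg α) (Ne.symm h0)
  -- quadratic in t
  have quad : ∀ t : ℝ, 0 ≤ Q.re * (t * t) + (-(2 * ‖α‖)) * t + P.re := by
    intro t
    set c : ℂ := -(t:ℂ) * α / (‖α‖ : ℂ) with hc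
    have hnn := hBnn (u + c • v)
    rw [cs_aux ha hf, cs_sym ha hf u v] at hnn
    have hcabs : (‖α‖ : ℂ) ≠ 0 := by exact_mod_cast h0
    have hm : α * (starRingEnd ℂ) α = (‖α‖ : ℂ) * (‖α‖ : ℂ) := by
      rw [Complex.mul_conj, Complex.normSq_eq_norm_sq]; push_cast; ring
    have e1 : (starRingEnd ℂ c) * α = ((-(t * ‖α‖) : ℝ) : ℂ) := by
      rw [hc]
      rw [map_div₀, map_mul, map_neg, Complex.conj_ofReal, Complex.conj_ofReal]
      field_simp
      push_cast
      linear_combination (-(t : ℂ)) * hm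
    have e2 : c * (starRingEnd ℂ α) = ((-(t * ‖α‖) : ℝ) : ℂ) := by
      have := congrArg (starRingEnd ℂ) e1
      simpa [map_mul, Complex.conj_ofReal, mul_comm] using this
    have e3 : c * (starRingEnd ℂ c) = ((t * t : ℝ) : ℂ) := by
      rw [hc, map_div₀, map_mul, map_neg, Complex.conj_ofReal, Complex.conj_ofReal]
      field_simp
      push_cast
      linear_combination ((t : ℂ) * (t : ℂ)) * hm
    rw [mul_comm c ((starRingEnd ℂ) α)] at hnn
    rw [mul_comm ((starRingEnd ℂ) α) c] at hnn
    rw [e1, e2, e3] at hnn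
    have := (Complex.nonneg_iff.mp hnn).1
    simp only [Complex.add_re, Complex.ofReal_re, Complex.mul_re, Complex.ofReal_im] at this
    nlinarith [this]
  have hd := discrim_le_zero quad
  rw [discrim] at hd
  nlinarith [hd]

lemma aNorm_nonneg (a x : A) : 0 ≤ aNorm a x :=
  Real.sSup_nonneg (by rintro r ⟨f, hf, rfl⟩; exact Real.sqrt_nonneg _)

lemma memSa_bound {a : A} (ha : 0 ≤ a) {y : A} (hy : BddAbove (aNormSet a y))
    {f : A →ₗ[ℂ] ℂ} (hf : MemSa a f) :
    (f (star y * a * y)).re ≤ (aNorm a y) ^ 2 := by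
  have h1 : Real.sqrt (f (star y * a * y)).re ≤ aNorm a y := le_csSup hy ⟨f, hf, rfl⟩
  have h2 : 0 ≤ (f (star y * a * y)).re :=
    (Complex.nonneg_iff.mp (posLF_nonneg hf.1 (star_left_conjugate_nonneg ha y))).1
  nlinarith [Real.sq_sqrt h2, Real.sqrt_nonneg (f (star y * a * y)).re]

lemma key {a : A} (ha : 0 ≤ a) {f : A →ₗ[ℂ] ℂ} (hfS : MemSa a f) {y : A}
    (hy : BddAbove (aNormSet a y)) {g : A →ₗ[ℂ] ℂ} (hg : IsPosLF g) :
    (g (star y * a * y)).re ≤ (aNorm a y) ^ 2 * (g a).re := by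
  set Y := star y * a * y with hY
  have hga := Complex.nonneg_iff.mp (posLF_nonneg hg ha)
  have hgyre : 0 ≤ (g Y).re :=
    (Complex.nonneg_iff.mp (posLF_nonneg hg (star_left_conjugate_nonneg ha y))).1
  set r := (g a).re with hr
  rcases eq_or_lt_of_le hga.1 with h0 | hpos
  · -- g a = 0
    have hga0 : g a = 0 := by
      apply Complex.ext
      · simpa using h0.symm
      · simpa using hga.2.symm
    by_contra hcon
    push_neg at hcon
    have hs : 0 < (g Y).re := by nlinarith
    set s := (g Y).re
    set M := aNorm a y
    have hF : (f Y).re ≤ M ^ 2 := memSa_bound ha hy hfS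
    set t : ℝ := (M ^ 2 - (f Y).re + 1) / s with ht
    have htpos : 0 < t := by apply div_pos; linarith; exact hs
    have hmem : MemSa a (f + (t : ℂ) • g) := by
      constructor
      · intro w
        have h1 := hfS.1 w
        have h2 := hg w
        have h3 : (0:ℂ) ≤ (t:ℂ) * g (star w * w) := by
          apply mul_nonneg _ h2
          rw [Complex.nonneg_iff]
          constructor <;> simp [htpos.le]
        simpa using add_nonneg h1 h3
      · simp [hfS.2, hga0]
    have hb := memSa_bound ha hy hmem
    have heval : ((f + (t : ℂ) • g) Y).re = (f Y).re + t * (g Y).re := by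
      simp [Complex.add_re, Complex.re_ofReal_mul]
    rw [heval] at hb
    have : (f Y).re + t * s = M ^ 2 + 1 := by
      rw [ht]; field_simp; ring
    linarith
  · -- g a > 0
    have hgaeq : g a = (r : ℂ) := by
      apply Complex.ext <;> simp [hr, ← hga.2]
    have hmem : MemSa a (((r : ℂ)⁻¹) • g) := by
      constructor
      · intro w
        have h2 := hg w
        have : (0:ℂ) ≤ (r:ℂ)⁻¹ * g (star w * w) := by
          apply mul_nonneg _ h2
          rw [Complex.nonneg_iff]
          constructor <;> simp [inv_nonneg, hpos.le]
        simpa using this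
      · have : (r : ℂ) ≠ 0 := by exact_mod_cast hpos.ne'
        simp [hgaeq, inv_mul_cancel₀ this]
    have hb := memSa_bound ha hy hmem
    have heval : (((r : ℂ)⁻¹) • g) Y = ((r⁻¹ : ℝ) : ℂ) * g Y := by
      push_cast; simp
    rw [heval] at hb
    rw [Complex.re_ofReal_mul] at hb
    have : (g Y).re = r * (r⁻¹ * (g Y).re) := by field_simp
    rw [this]
    calc r * (r⁻¹ * (g Y).re) ≤ r * (aNorm a y) ^ 2 :=
          mul_le_mul_of_nonneg_left hb hpos.le
      _ = (aNorm a y) ^ 2 * r := mul_comm _ _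

noncomputable def conjLF (f : A →ₗ[ℂ] ℂ) (c : A) : A →ₗ[ℂ] ℂ where
  toFun b := f (star c * b * c)
  map_add' u v := by
    show f (star c * (u + v) * c) = f (star c * u * c) + f (star c * v * c)
    rw [mul_add, add_mul, map_add]
  map_smul' r b := by
    show f (star c * (r • b) * c) = (RingHom.id ℂ) r • f (star c * b * c)
    rw [mul_smul_comm, smul_mul_assoc, map_smul]; rfl

lemma conjLF_pos {f : A →ₗ[ℂ] ℂ} (hf : IsPosLF f) (c : A) : IsPosLF (conjLF f c) := by
  intro w
  show 0 ≤ f (star c * (star w * w) * c)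
  have h : star c * (star w * w) * c = star (w * c) * (w * c) := by
    rw [star_mul]; noncomm_ring
  rw [h]; exact hf _

set_option maxHeartbeats 1000000 in
theorem stmt15_aux (a : A) (ha : 0 ≤ a) (ha0 : a ≠ 0)
    (x xadj y yadj z zadj : A)
    (hxadj : a * xadj = star x * a) (hyadj : a * yadj = star y * a)
    (hzadj : a * zadj = star z * a)
    (hy : BddAbove (aNormSet a y))
    (hxz : BddAbove (aNormSet a (x * xadj + z * zadj)))
    (hy1 : aNorm a y ≤ 1) :
    sSup {r : ℝ | ∃ f : A →ₗ[ℂ] ℂ, MemSa a f ∧ r = ‖f (a * (x * y * zadj))‖} ≤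
      (aNorm a y / 2) * aNorm a (x * xadj + z * zadj) := by
  set M := aNorm a y with hM
  set w : A := x * xadj + z * zadj with hw
  set N := aNorm a w with hN
  have hM0 : 0 ≤ M := aNorm_nonneg a y
  have hN0 : 0 ≤ N := aNorm_nonneg a w
  have hsa : star a = a := (IsSelfAdjoint.of_nonneg ha).star_eq
  have hx1 : star xadj * a = a * x := by
    have := congrArg star hxadj
    simpa [star_mul, hsa] using this
  have hz1 : star zadj * a = a * z := by
    have := congrArg star hzadj
    simpa [star_mul, hsa] using this
  apply Real.sSup_le _ (by positivity)
  rintro rr ⟨f, hfS, rfl⟩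
  have hf := hfS.1
  have hBnn : ∀ u : A, 0 ≤ f (star u * a * u) := fun u => posLF_nonneg hf (star_left_conjugate_nonneg ha u)
  -- rewrite the argument
  have harg : a * (x * y * zadj) = star xadj * a * (y * zadj) := by
    rw [hx1]; noncomm_ring
  rw [harg]
  set F := f (star xadj * a * (y * zadj)) with hF
  -- Cauchy–Schwarz
  have hcs := cs ha hf (y * zadj) xadj
  -- key bound via conjugated functional
  set g := conjLF f zadj with hg
  have hgpos : IsPosLF g := conjLF_pos hf zadj
  have hkey := key ha hfS hy hgpos
  have hgY : g (star y * a * y) = f (star (y * zadj) * a * (y * zadj)) := by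
    show f (star zadj * (star y * a * y) * zadj) = _
    congr 1
    rw [star_mul]; noncomm_ring
  have hgA : g a = f (star zadj * a * zadj) := rfl
  rw [hgY, hgA] at hkey
  set p := (f (star zadj * a * zadj)).re with hp
  set q := (f (star xadj * a * xadj)).re with hq
  have hp0 : 0 ≤ p := (Complex.nonneg_iff.mp (hBnn zadj)).1
  have hq0 : 0 ≤ q := (Complex.nonneg_iff.mp (hBnn xadj)).1
  have h1 : ‖F‖ ^ 2 ≤ M ^ 2 * p * q := by
    calc ‖F‖ ^ 2 ≤ (f (star (y * zadj) * a * (y * zadj))).re * q := hcs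
      _ ≤ (M ^ 2 * p) * q := mul_le_mul_of_nonneg_right hkey hq0
      _ = M ^ 2 * p * q := by ring
  -- relate p + q to f (a * w)
  have haw : a * w = star xadj * a * xadj + star zadj * a * zadj := by
    rw [hw, hx1, hz1]; noncomm_ring
  have hpq : (f (a * w)).re = q + p := by
    rw [haw, map_add, Complex.add_re]
  have hfaw_nn : 0 ≤ f (a * w) := by
    rw [haw, map_add]
    exact add_nonneg (hBnn xadj) (hBnn zadj)
  -- bound f (a * w) by N via Cauchy–Schwarz with v = 1
  have hcs2 := cs ha hf w 1
  simp only [star_one, one_mul, mul_one] at hcs2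
  have hfa1 : (f a).re = 1 := by rw [hfS.2]; rfl
  rw [hfa1, mul_one] at hcs2
  have hsqrt : Real.sqrt ((f (star w * a * w)).re) ≤ N :=
    le_csSup hxz ⟨f, hfS, rfl⟩
  have hwre : 0 ≤ (f (star w * a * w)).re := (Complex.nonneg_iff.mp (hBnn w)).1
  have hawre : ‖f (a * w)‖ = (f (a * w)).re := by
    have him := (Complex.nonneg_iff.mp hfaw_nn).2
    have hre := (Complex.nonneg_iff.mp hfaw_nn).1
    have heq : f (a * w) = (((f (a * w)).re : ℝ) : ℂ) := Complex.ext rfl him.symm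
    conv_lhs => rw [heq]
    rw [Complex.norm_real, Real.norm_eq_abs, abs_of_nonneg hre]
  have h5 : (f (star w * a * w)).re ≤ N ^ 2 := by
    nlinarith [Real.sq_sqrt hwre, hsqrt, Real.sqrt_nonneg ((f (star w * a * w)).re)]
  have h6 : (f (a * w)).re ^ 2 ≤ N ^ 2 := by
    rw [← hawre]; calc ‖f (a * w)‖ ^ 2 ≤ (f (star w * a * w)).re := hcs2
      _ ≤ N ^ 2 := h5
  have hfwN : (f (a * w)).re ≤ N := le_of_pow_le_pow_left₀ two_ne_zero hN0 h6
  -- final combination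
  have hpqN : p + q ≤ N := by linarith [hfwN, hpq]
  have h2 : (p + q) * (p + q) ≤ N * N := mul_le_mul hpqN hpqN (by linarith) hN0
  have h3 : M ^ 2 * p * q ≤ M ^ 2 * ((p + q) * (p + q) / 4) := by
    have : p * q ≤ (p + q) * (p + q) / 4 := by nlinarith [sq_nonneg (p - q)]
    nlinarith [sq_nonneg M, this, mul_le_mul_of_nonneg_left this (sq_nonneg M)]
  have h4 : M ^ 2 * ((p + q) * (p + q) / 4) ≤ M ^ 2 * (N * N / 4) := by
    apply mul_le_mul_of_nonneg_left _ (sq_nonneg M)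
    linarith
  have hsq : ‖F‖ ^ 2 ≤ ((M / 2) * N) ^ 2 := by
    calc ‖F‖ ^ 2 ≤ M ^ 2 * (N * N / 4) := by linarith
      _ = ((M / 2) * N) ^ 2 := by ring
  exact le_of_pow_le_pow_left₀ two_ne_zero (by positivity) hsq

/-- `vₐ(x y z^{#a}) ≤ (‖y‖ₐ/2) ‖x x^{#a} + z z^{#a}‖ₐ` when `‖y‖ₐ ≤ 1`. -/
theorem stmt15 (a : A) (ha : 0 ≤ a) (ha0 : a ≠ 0)
    (x xadj y yadj z zadj : A)
    (hxadj : a * xadj = star x * a) (hyadj : a * yadj = star y * a)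
    (hzadj : a * zadj = star z * a)
    (hy : BddAbove (aNormSet a y))
    (hxz : BddAbove (aNormSet a (x * xadj + z * zadj)))
    (hy1 : aNorm a y ≤ 1) :
    aNR a (x * y * zadj) ≤ (aNorm a y / 2) * aNorm a (x * xadj + z * zadj) :=
  stmt15_aux a ha ha0 x xadj y yadj z zadj hxadj hyadj hzadj hy hxz hy1

end
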